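/- The point (X*, Y*, Z*) with X* = Ads/V, Y* = wAdrW/V², Z* = vAsrW/V², where Q = sv+cdw, V = BQ−ds, W = BQ−ds(A+1), is an equilibrium of the system X' = r(1−X)X − cBXY/(X+A) − BXZ/(X+A), Y' = w(cY+Z)BX/(X+A) − sY, Z' = v(cY+Z)BX/(X+A) − dZ; i.e., all three right-hand sides vanish at this point. -/

import Mathlib

theorem stmt_0 (r c w s v d B A : ℝ)
    (hr : 0 < r) (hc : 0 < c) (hw : 0 < w) (hs : 0 < s) (hv : 0 < v)
    (hd : 0 < d) (hB : 0 < B) (hA : 0 < A)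
    (hV : B * (s * v + c * d * w) - d * s ≠ 0) :
    let Q := s * v + c * d * w
    let V := B * Q - d * s
    let W := B * Q - d * s * (A + 1)
    let X := A * d * s / V
    let Y := w * A * d * r * W / V ^ 2
    let Z := v * A * s * r * W / V ^ 2
    r * (1 - X) * X - c * (B * X / (X + A)) * Y - (B * X / (X + A)) * Z = 0 ∧
    w * (c * Y + Z) * (B * X / (X + A)) - s * Y = 0 ∧
    v * (c * Y + Z) * (B * X / (X + A)) - d * Z = 0 := by
  intro Q V W X Y Z
  have hQ : (0:ℝ) < Q := by positivity
  have hQ' : Q ≠ 0 := hQ.ne'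
  have hV' : V ≠ 0 := hV
  have hXA : X + A = A * (B * Q) / V := by
    show A * d * s / V + A = _
    field_simp
    ring
  have hXA0 : X + A ≠ 0 := by
    rw [hXA]; exact div_ne_zero (by positivity) hV'
  have hP : B * X / (X + A) = d * s / Q := by
    rw [div_eq_div_iff hXA0 hQ', hXA]
    show B * (A * d * s / V) * Q = d * s * (A * (B * Q) / V)
    field_simp
  rw [hP]
  refine ⟨?_, ?_, ?_⟩ <;>
  · show _ = 0
    simp only [X, Y, Z, W, V]
    have hV2 : B * Q - d * s ≠ 0 := hV'
    field_simp
    ring
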